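/- For every t > 0 the function Q_t g is Lipschitz on X, with Lipschitz constant Lip(Q_t g) ≤ √(2 Osc(g)/t). -/

import Mathlib

/-!
Setting: `(X, d)` is a length metric space and `g : X → ℝ` is lower semicontinuous and
bounded.  `Q_t g(x) := inf_y (g(y) + d(x,y)²/(2t))` for `t > 0`, `Q_0 g := g`, and
`Osc(g) := sup g - inf g`.
-/

open Filter Topology Metric

noncomputable section

/-- A metric space is a *length space* if the distance between any two points equals the
infimum of the lengths (total variations) of continuous curves joining them. -/
def IsLengthSpace (X : Type*) [MetricSpace X] : Prop :=
  ∀ x y : X,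
    ENNReal.ofReal (dist x y) =
      ⨅ γ : { γ : ℝ → X // ContinuousOn γ (Set.Icc 0 1) ∧ γ 0 = x ∧ γ 1 = y },
        eVariationOn γ.1 (Set.Icc 0 1)

variable {X : Type*} [MetricSpace X]

/-- The Hopf–Lax semigroup `Q_t g(x) = inf_y (g(y) + d(x,y)²/(2t))`, with `Q_0 g = g`. -/
def QHL (g : X → ℝ) (t : ℝ) (x : X) : ℝ :=
  if t = 0 then g x else ⨅ y : X, (g y + dist x y ^ 2 / (2 * t))

/-- The oscillation `Osc(g) = sup g - inf g`. -/
def Osc (g : X → ℝ) : ℝ :=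
  sSup (Set.range g) - sInf (Set.range g)

lemma HL_sqrt_aux {O t : ℝ} (ht : 0 < t) (hO : 0 ≤ O) :
    Real.sqrt (2 * t * O) / t = Real.sqrt (2 * O / t) := by
  rw [show 2 * O / t = 2 * t * O / t ^ 2 by field_simp,
    Real.sqrt_div (by positivity), Real.sqrt_sq ht.le]

lemma HL_sqrt_add_le {a b : ℝ} (ha : 0 ≤ a) (hb : 0 ≤ b) :
    Real.sqrt (a + b) ≤ Real.sqrt a + Real.sqrt b := by
  have h1 := Real.sq_sqrt ha
  have h2 := Real.sq_sqrt hb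
  have h3 := Real.sqrt_nonneg a
  have h4 := Real.sqrt_nonneg b
  have : a + b ≤ (Real.sqrt a + Real.sqrt b) ^ 2 := by nlinarith
  calc Real.sqrt (a + b) ≤ Real.sqrt ((Real.sqrt a + Real.sqrt b) ^ 2) :=
        Real.sqrt_le_sqrt this
    _ = Real.sqrt a + Real.sqrt b := Real.sqrt_sq (by positivity)

/-- The basic (non sharp) local estimate for the Hopf–Lax semigroup:
`Q_t g x ≤ Q_t g z + √(2 Osc g / t) d(x,z) + d(x,z)²/(2t)`. -/
lemma HL_stepA [Nonempty X] (g : X → ℝ) (hba : BddAbove (Set.range g))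
    (hbb : BddBelow (Set.range g)) {t : ℝ} (ht : 0 < t) (x z : X) :
    QHL g t x ≤ QHL g t z + Real.sqrt (2 * Osc g / t) * dist x z
      + dist x z ^ 2 / (2 * t) := by
  obtain ⟨B, hB⟩ := hbb
  set K := Real.sqrt (2 * Osc g / t) with hK
  set d := dist x z with hd
  have hd0 : 0 ≤ d := dist_nonneg
  have hQ : ∀ w : X, QHL g t w = ⨅ y : X, (g y + dist w y ^ 2 / (2 * t)) := by
    intro w; simp [QHL, ht.ne']
  have hbw : ∀ w : X, BddBelow (Set.range fun y => g y + dist w y ^ 2 / (2 * t)) := by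
    intro w
    refine ⟨B, ?_⟩
    rintro _ ⟨y, rfl⟩
    have := hB ⟨y, rfl⟩
    have : 0 ≤ dist w y ^ 2 / (2 * t) := by positivity
    have hb := hB (Set.mem_range_self y)
    linarith
  have hOsc : 0 ≤ Osc g := by
    obtain ⟨w⟩ := ‹Nonempty X›
    have h1 : sInf (Set.range g) ≤ g w := csInf_le ⟨B, hB⟩ ⟨w, rfl⟩
    have h2 : g w ≤ sSup (Set.range g) := le_csSup hba ⟨w, rfl⟩
    unfold Osc; linarith
  -- the ε-approximate bound
  have key : ∀ ε : ℝ, 0 < ε →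
      QHL g t x ≤ QHL g t z + K * d + d ^ 2 / (2 * t)
        + (ε + Real.sqrt (2 * t * ε) / t * d) := by
    intro ε hε
    have hlt : QHL g t z < QHL g t z + ε := by linarith
    rw [hQ z] at hlt
    obtain ⟨y, hy⟩ := exists_lt_of_ciInf_lt hlt
    rw [← hQ z] at hy
    have hQz : QHL g t z ≤ g z := by
      rw [hQ z]
      have := ciInf_le (hbw z) z
      simpa using this
    have hgy : sInf (Set.range g) ≤ g y := csInf_le ⟨B, hB⟩ ⟨y, rfl⟩
    have hgz : g z ≤ sSup (Set.range g) := le_csSup hba ⟨z, rfl⟩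
    have h2t : (0:ℝ) < 2 * t := by linarith
    have hd2 : dist z y ^ 2 ≤ 2 * t * (Osc g + ε) := by
      have h1 : dist z y ^ 2 / (2 * t) < g z - g y + ε := by linarith
      have h2 : g z - g y ≤ Osc g := by unfold Osc; linarith
      have := (div_lt_iff₀ h2t).mp h1
      nlinarith
    have hdzy : dist z y ≤ Real.sqrt (2 * t * Osc g) + Real.sqrt (2 * t * ε) := by
      calc dist z y = Real.sqrt (dist z y ^ 2) := (Real.sqrt_sq dist_nonneg).symm
        _ ≤ Real.sqrt (2 * t * Osc g + 2 * t * ε) := by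
            apply Real.sqrt_le_sqrt; nlinarith
        _ ≤ _ := HL_sqrt_add_le (by positivity) (by positivity)
    have hS : Real.sqrt (2 * t * Osc g) = K * t := by
      rw [hK, ← HL_sqrt_aux ht hOsc]; field_simp
    set E := Real.sqrt (2 * t * ε) with hE
    have hE0 : 0 ≤ E := Real.sqrt_nonneg _
    have hxy : dist x y ^ 2 ≤ (d + dist z y) ^ 2 := by
      have h := dist_triangle x z y
      have := dist_nonneg (x := x) (y := y)
      nlinarith
    have hprod : d * dist z y ≤ d * (K * t + E) := by
      apply mul_le_mul_of_nonneg_left _ hd0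
      rw [← hS]; exact hdzy
    have hQx : QHL g t x ≤ g y + dist x y ^ 2 / (2 * t) := by
      rw [hQ x]; exact ciInf_le (hbw x) y
    have claim : 2 * t * g y + dist x y ^ 2
        ≤ 2 * t * (QHL g t z + ε) + 2 * t * K * d + d ^ 2 + 2 * E * d := by
      have h1 : 2 * t * (g y + dist z y ^ 2 / (2 * t)) ≤ 2 * t * (QHL g t z + ε) :=
        mul_le_mul_of_nonneg_left hy.le h2t.le
      have h1' : 2 * t * g y + dist z y ^ 2 ≤ 2 * t * (QHL g t z + ε) := by
        field_simp at h1; linarith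
      nlinarith
    have : g y + dist x y ^ 2 / (2 * t)
        ≤ QHL g t z + K * d + d ^ 2 / (2 * t) + (ε + E / t * d) := by
      have hdiv : 0 ≤ (2 * t * (QHL g t z + ε) + 2 * t * K * d + d ^ 2 + 2 * E * d
          - (2 * t * g y + dist x y ^ 2)) / (2 * t) :=
        div_nonneg (sub_nonneg.mpr claim) h2t.le
      rw [← sub_nonneg]
      have heq : QHL g t z + K * d + d ^ 2 / (2 * t) + (ε + E / t * d)
          - (g y + dist x y ^ 2 / (2 * t))
          = (2 * t * (QHL g t z + ε) + 2 * t * K * d + d ^ 2 + 2 * E * d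
          - (2 * t * g y + dist x y ^ 2)) / (2 * t) := by
        field_simp; ring
      rw [heq]; exact hdiv
    linarith
  -- pass to the limit ε → 0⁺
  have hcont : Tendsto (fun ε : ℝ => QHL g t z + K * d + d ^ 2 / (2 * t)
      + (ε + Real.sqrt (2 * t * ε) / t * d)) (nhdsWithin 0 (Set.Ioi 0))
      (nhds (QHL g t z + K * d + d ^ 2 / (2 * t))) := by
    have : Continuous (fun ε : ℝ => QHL g t z + K * d + d ^ 2 / (2 * t)
        + (ε + Real.sqrt (2 * t * ε) / t * d)) := by
      continuity
    have h0 := (this.tendsto 0).mono_left (nhdsWithin_le_nhds (s := Set.Ioi 0))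
    simpa using h0
  exact ge_of_tendsto hcont (eventually_mem_nhdsWithin.mono fun ε hε => key ε hε)

/-- For every `t > 0` the function `Q_t g` is Lipschitz with constant at most
`√(2 Osc(g) / t)`. -/
theorem statement10 (hX : IsLengthSpace X) (g : X → ℝ) (hg : LowerSemicontinuous g)
    (hba : BddAbove (Set.range g)) (hbb : BddBelow (Set.range g))
    (t : ℝ) (ht : 0 < t) :
    LipschitzWith (Real.toNNReal (Real.sqrt (2 * Osc g / t))) (QHL g t) := by
  rcases isEmpty_or_nonempty X with hE | hN
  · exact LipschitzWith.of_dist_le_mul fun x => (IsEmpty.false x).elim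
  apply LipschitzWith.of_dist_le_mul
  intro x z
  rw [Real.coe_toNNReal _ (Real.sqrt_nonneg _)]
  set K := Real.sqrt (2 * Osc g / t) with hKdef
  set d := dist x z with hd
  have hd0 : 0 ≤ d := dist_nonneg
  have hK0 : 0 ≤ K := Real.sqrt_nonneg _
  have h2t : (0:ℝ) < 2 * t := by linarith
  have key : ∀ s : ℝ, 0 < s →
      dist (QHL g t x) (QHL g t z) ≤ (K + s / (2 * t)) * (d + s) := by
    intro s hs
    -- pick a curve of length < d + s
    have hlt : (⨅ γ : { γ : ℝ → X // ContinuousOn γ (Set.Icc 0 1) ∧ γ 0 = x ∧ γ 1 = z },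
        eVariationOn γ.1 (Set.Icc 0 1)) < ENNReal.ofReal (d + s) := by
      rw [← hX x z, ENNReal.ofReal_add hd0 hs.le]
      exact ENNReal.lt_add_right ENNReal.ofReal_ne_top
        (ENNReal.ofReal_pos.mpr hs).ne'
    obtain ⟨⟨γ, hγc, hγ0, hγ1⟩, hγv⟩ := iInf_lt_iff.mp hlt
    simp only at hγv
    -- uniform continuity of γ on [0,1]
    have huc : UniformContinuousOn γ (Set.Icc 0 1) :=
      isCompact_Icc.uniformContinuousOn_of_continuous hγc
    rw [Metric.uniformContinuousOn_iff] at huc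
    obtain ⟨η, hη, hcl⟩ := huc s hs
    obtain ⟨n, hn⟩ := exists_nat_gt (1 / η)
    have hn0 : (0:ℝ) < n := lt_trans (by positivity) hn
    have hηn : 1 / (n:ℝ) < η := by
      rw [div_lt_iff₀ hn0]
      rw [div_lt_iff₀ hη] at hn
      nlinarith
    set u : ℕ → ℝ := fun i => min ((i : ℝ) / n) 1 with hu
    have humem : ∀ i, u i ∈ Set.Icc (0:ℝ) 1 := fun i =>
      ⟨le_min (by positivity) zero_le_one, min_le_right _ _⟩
    have humono : Monotone u := by
      intro i j hij
      have hij' : (i:ℝ) ≤ j := by exact_mod_cast hij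
      exact min_le_min (by gcongr) le_rfl
    have hu0 : u 0 = 0 := by simp [hu]
    have hun : u n = 1 := by simp [hu, div_self hn0.ne']
    have hstep : ∀ i : ℕ, u (i + 1) ≤ u i + 1 / n := by
      intro i
      have h1 : ((i:ℝ) + 1) / n = (i:ℝ) / n + 1 / n := by ring
      calc u (i + 1) = min (((i:ℝ) + 1) / n) 1 := by simp [hu]
        _ ≤ min ((i:ℝ) / n + 1 / n) (1 + 1 / n) :=
            min_le_min (le_of_eq h1) (le_add_of_nonneg_right (by positivity))
        _ = u i + 1 / n := by rw [← min_add_add_right]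
    have hclose : ∀ i : ℕ, dist (γ (u i)) (γ (u (i + 1))) < s := by
      intro i
      apply hcl (u i) (humem i) (u (i + 1)) (humem _)
      have h1 := humono (Nat.le_succ i)
      have h2 := hstep i
      rw [Real.dist_eq, abs_lt]
      constructor <;> [linarith; linarith]
    -- endpoints
    have he0 : γ (u 0) = x := by rw [hu0, hγ0]
    have hen : γ (u n) = z := by rw [hun, hγ1]
    -- term bound from HL_stepA
    have hterm : ∀ i : ℕ, dist (QHL g t (γ (u i))) (QHL g t (γ (u (i + 1))))
        ≤ (K + s / (2 * t)) * dist (γ (u i)) (γ (u (i + 1))) := by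
      intro i
      set a := γ (u i)
      set b := γ (u (i + 1))
      have h1 := HL_stepA g hba hbb ht a b
      have h2 := HL_stepA g hba hbb ht b a
      rw [dist_comm b a] at h2
      rw [← hKdef] at h1 h2
      have hab : dist a b < s := hclose i
      have hab0 : 0 ≤ dist a b := dist_nonneg
      have hsq : dist a b ^ 2 ≤ s * dist a b := by nlinarith
      have hsq' : dist a b ^ 2 / (2 * t) ≤ s * dist a b / (2 * t) := by gcongr
      have hexp : (K + s / (2 * t)) * dist a b
          = K * dist a b + s * dist a b / (2 * t) := by ring
      rw [Real.dist_eq, abs_le]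
      constructor
      · linarith
      · linarith
    -- sum of distances is bounded by the variation
    have hsum : ∑ i ∈ Finset.range n, dist (γ (u i)) (γ (u (i + 1))) ≤ d + s := by
      have hvar := eVariationOn.sum_le (f := γ) (n := n) humono humem
      have hlt2 : ∑ i ∈ Finset.range n, edist (γ (u (i + 1))) (γ (u i))
          < ENNReal.ofReal (d + s) := lt_of_le_of_lt hvar hγv
      have heq : ∑ i ∈ Finset.range n, dist (γ (u i)) (γ (u (i + 1)))
          = (∑ i ∈ Finset.range n, edist (γ (u (i + 1))) (γ (u i))).toReal := by
        rw [ENNReal.toReal_sum (fun i _ => edist_ne_top _ _)]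
        refine Finset.sum_congr rfl fun i _ => ?_
        rw [dist_edist, edist_comm]
      rw [heq]
      have := ENNReal.toReal_mono ENNReal.ofReal_ne_top hlt2.le
      rwa [ENNReal.toReal_ofReal (by linarith)] at this
    calc dist (QHL g t x) (QHL g t z)
        = dist (QHL g t (γ (u 0))) (QHL g t (γ (u n))) := by rw [he0, hen]
      _ ≤ ∑ i ∈ Finset.range n, dist (QHL g t (γ (u i))) (QHL g t (γ (u (i + 1)))) :=
          dist_le_range_sum_dist (fun i => QHL g t (γ (u i))) n
      _ ≤ ∑ i ∈ Finset.range n, (K + s / (2 * t)) * dist (γ (u i)) (γ (u (i + 1))) :=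
          Finset.sum_le_sum fun i _ => hterm i
      _ = (K + s / (2 * t)) * ∑ i ∈ Finset.range n, dist (γ (u i)) (γ (u (i + 1))) := by
          rw [Finset.mul_sum]
      _ ≤ (K + s / (2 * t)) * (d + s) := by
          apply mul_le_mul_of_nonneg_left hsum
          positivity
  -- pass to the limit s → 0⁺
  have hcont : Tendsto (fun s : ℝ => (K + s / (2 * t)) * (d + s))
      (nhdsWithin 0 (Set.Ioi 0)) (nhds (K * d)) := by
    have hc : Continuous fun s : ℝ => (K + s / (2 * t)) * (d + s) := by continuity
    have h0 := (hc.tendsto 0).mono_left (nhdsWithin_le_nhds (s := Set.Ioi 0))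
    simpa using h0
  exact ge_of_tendsto hcont (eventually_mem_nhdsWithin.mono fun s hs => key s hs)
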